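/- Let q ∈ (0,1] and let n be a nonnegative integer. The family of triangular q-Bernstein polynomials {B^n_{ijk}(u,v) : i, j, k ≥ 0, i + j + k = n}, regarded as elements of the real vector space of bivariate real polynomials of total degree at most n, is a basis of that space (equivalently, it is linearly independent and its span equals the space of bivariate polynomials of total degree ≤ n). -/

import Mathlib

open Finset

/-- The q-integer [r] = 1 + q + ... + q^(r-1). -/
noncomputable def qInt (q : ℝ) (r : ℕ) : ℝ := ∑ s ∈ Finset.range r, q ^ s

/-- The q-factorial [r]!. -/
noncomputable def qFact (q : ℝ) : ℕ → ℝ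
  | 0 => 1
  | r + 1 => qInt q (r + 1) * qFact q r

/-- The q-binomial coefficient [i choose j]_q (zero unless i ≥ j ≥ 0). -/
noncomputable def qBinom (q : ℝ) (i j : ℕ) : ℝ :=
  if j ≤ i then qFact q i / (qFact q j * qFact q (i - j)) else 0

/-- The q-binomial coefficient with integer indices, zero unless i ≥ j ≥ 0. -/
noncomputable def qBinomZ (q : ℝ) (i j : ℤ) : ℝ :=
  if 0 ≤ j ∧ j ≤ i then qFact q i.toNat / (qFact q j.toNat * qFact q (i - j).toNat) else 0

/-- The triangular q-Bernstein polynomial B^n_{ijk}(u,v)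
    (meaningful for i + j + k = n). -/
noncomputable def triB (q : ℝ) (n i j k : ℕ) (u v : ℝ) : ℝ :=
  qBinom q n k * (Nat.choose (i + j) i : ℝ) * u ^ i * v ^ j *
    ∏ s ∈ Finset.range k, (1 - q ^ s * u - q ^ s * v)

/-- The triangular q-Bernstein polynomial with integer indices; by convention it is
    zero whenever any of the indices is negative. -/
noncomputable def triBZ (q : ℝ) (n : ℕ) (i j k : ℤ) (u v : ℝ) : ℝ :=
  if 0 ≤ i ∧ 0 ≤ j ∧ 0 ≤ k then triB q n i.toNat j.toNat k.toNat u v else 0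

/-- The classical triangular Bernstein polynomial b^n_{ijk}(u,v). -/
noncomputable def triBern (n i j k : ℕ) (u v : ℝ) : ℝ :=
  (Nat.factorial n : ℝ) /
      ((Nat.factorial i : ℝ) * (Nat.factorial j : ℝ) * (Nat.factorial k : ℝ)) *
    u ^ i * v ^ j * (1 - u - v) ^ k

/-- The set of triples (i, j, k) of nonnegative integers with i + j + k = n. -/
def simplex (n : ℕ) : Finset (ℕ × ℕ × ℕ) :=
  (Finset.range (n + 1) ×ˢ Finset.range (n + 1) ×ˢ Finset.range (n + 1)).filter
    (fun p => p.1 + p.2.1 + p.2.2 = n)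

/-- The triangular q-Bernstein polynomial as a bivariate polynomial. -/
noncomputable def triBP (q : ℝ) (n i j k : ℕ) : MvPolynomial (Fin 2) ℝ :=
  MvPolynomial.C (qBinom q n k * (Nat.choose (i + j) i : ℝ)) *
    MvPolynomial.X 0 ^ i * MvPolynomial.X 1 ^ j *
    ∏ s ∈ Finset.range k,
      (1 - MvPolynomial.C (q ^ s) * MvPolynomial.X 0 - MvPolynomial.C (q ^ s) * MvPolynomial.X 1)


section Aux

lemma qFact_pos {q : ℝ} (hq : 0 < q) : ∀ r, 0 < qFact q r
  | 0 => one_pos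
  | r + 1 => by
    have h1 : 0 < qInt q (r + 1) := by
      apply Finset.sum_pos (fun s _ => pow_pos hq s)
      exact ⟨0, Finset.mem_range.mpr (Nat.succ_pos r)⟩
    exact mul_pos h1 (qFact_pos hq r)

lemma qBinom_pos {q : ℝ} (hq : 0 < q) {i j : ℕ} (h : j ≤ i) : 0 < qBinom q i j := by
  rw [qBinom, if_pos h]
  exact div_pos (qFact_pos hq i) (mul_pos (qFact_pos hq j) (qFact_pos hq (i - j)))

open MvPolynomial

lemma factor_deg (a : ℝ) :
    (1 - C a * X 0 - C a * X 1 : MvPolynomial (Fin 2) ℝ).totalDegree ≤ 1 := by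
  refine le_trans (totalDegree_sub _ _) (max_le (le_trans (totalDegree_sub _ _) ?_) ?_)
  · exact max_le (by simp [totalDegree_one]) (le_trans (totalDegree_mul _ _) (by simp))
  · exact le_trans (totalDegree_mul _ _) (by simp)

lemma prod_deg (q : ℝ) (k : ℕ) :
    (∏ s ∈ Finset.range k,
      (1 - C (q ^ s) * X 0 - C (q ^ s) * X 1 : MvPolynomial (Fin 2) ℝ)).totalDegree ≤ k := by
  refine le_trans (totalDegree_finset_prod _ _) ?_
  calc ∑ s ∈ Finset.range k, (1 - C (q^s) * X 0 - C (q^s) * X 1 :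
        MvPolynomial (Fin 2) ℝ).totalDegree ≤ ∑ s ∈ Finset.range k, 1 :=
        Finset.sum_le_sum (fun s _ => factor_deg _)
    _ = k := by simp

lemma prod_constantCoeff (q : ℝ) (k : ℕ) :
    constantCoeff (∏ s ∈ Finset.range k,
      (1 - C (q ^ s) * X 0 - C (q ^ s) * X 1 : MvPolynomial (Fin 2) ℝ)) = 1 := by
  rw [map_prod]
  apply Finset.prod_eq_one
  intro s _
  simp

lemma fin2_sum (μ : Fin 2 →₀ ℕ) : (μ.sum fun _ e => e) = μ 0 + μ 1 := by
  rw [Finsupp.sum_fintype _ _ (fun _ => rfl), Fin.sum_univ_two]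

lemma monomial_eq_fin2 (μ : Fin 2 →₀ ℕ) (r : ℝ) :
    (monomial μ r : MvPolynomial (Fin 2) ℝ) = C r * X 0 ^ (μ 0) * X 1 ^ (μ 1) := by
  rw [monomial_eq, Finsupp.prod_fintype _ _ (fun _ => pow_zero _), Fin.prod_univ_two, mul_assoc]

lemma mem_simplex {n i j k : ℕ} (h : i + j + k = n) : (i, j, k) ∈ simplex n := by
  simp only [simplex, Finset.mem_filter, Finset.mem_product, Finset.mem_range]
  omega

lemma triBP_mem_range (q : ℝ) (n i j k : ℕ) (h : i + j + k = n) :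
    triBP q n i j k ∈
      Set.range (fun p : simplex n => triBP q n p.1.1 p.1.2.1 p.1.2.2) :=
  ⟨⟨(i, j, k), mem_simplex h⟩, rfl⟩

lemma triBP_deg (q : ℝ) (n i j k : ℕ) :
    (triBP q n i j k).totalDegree ≤ 0 + i + j + k := by
  rw [triBP]
  refine le_trans (totalDegree_mul _ _) (add_le_add ?_ (prod_deg q k))
  refine le_trans (totalDegree_mul _ _) (add_le_add ?_ (totalDegree_X_pow _ _).le)
  refine le_trans (totalDegree_mul _ _) (add_le_add ?_ (totalDegree_X_pow _ _).le)
  exact (totalDegree_C _).le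

lemma key (q : ℝ) (hq0 : 0 < q) (n : ℕ) :
    ∀ d i j : ℕ, n ≤ i + j + d → i + j ≤ n →
    (X 0 ^ i * X 1 ^ j : MvPolynomial (Fin 2) ℝ) ∈
      Submodule.span ℝ (Set.range (fun p : simplex n => triBP q n p.1.1 p.1.2.1 p.1.2.2)) := by
  intro d
  induction d with
  | zero =>
    intro i j h1 h2
    have hc : (0:ℝ) < qBinom q n 0 * (Nat.choose (i + j) i : ℝ) := by
      apply mul_pos (qBinom_pos hq0 (Nat.zero_le n))
      exact_mod_cast Nat.choose_pos (Nat.le_add_right i j)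
    have hmem : triBP q n i j 0 ∈ Submodule.span ℝ
        (Set.range (fun p : simplex n => triBP q n p.1.1 p.1.2.1 p.1.2.2)) :=
      Submodule.subset_span (triBP_mem_range q n i j 0 (by omega))
    have := Submodule.smul_mem (Submodule.span ℝ
        (Set.range (fun p : simplex n => triBP q n p.1.1 p.1.2.1 p.1.2.2)))
        ((qBinom q n 0 * (Nat.choose (i + j) i : ℝ))⁻¹) hmem
    convert this using 1
    rw [triBP]
    simp only [Finset.range_zero, Finset.prod_empty, mul_one]
    rw [smul_eq_C_mul, ← mul_assoc, ← mul_assoc, ← C_mul, inv_mul_cancel₀ hc.ne', C_1, one_mul]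
  | succ d ih =>
    intro i j h1 h2
    by_cases hd : n ≤ i + j + d
    · exact ih i j hd h2
    · have hk : i + j + (d + 1) = n := by omega
      set k := d + 1 with hk1
      set c := qBinom q n k * (Nat.choose (i + j) i : ℝ) with hc1
      have hc : (0:ℝ) < c := by
        apply mul_pos (qBinom_pos hq0 (by omega))
        exact_mod_cast Nat.choose_pos (Nat.le_add_right i j)
      set P := ∏ s ∈ Finset.range k,
        (1 - C (q ^ s) * X 0 - C (q ^ s) * X 1 : MvPolynomial (Fin 2) ℝ) with hP
      set M := Submodule.span ℝ
        (Set.range (fun p : simplex n => triBP q n p.1.1 p.1.2.1 p.1.2.2)) with hM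
      have hmem : triBP q n i j k ∈ M := Submodule.subset_span (triBP_mem_range q n i j k hk)
      have hsm : (X 0 ^ i * X 1 ^ j : MvPolynomial (Fin 2) ℝ) * P ∈ M := by
        have := Submodule.smul_mem M (c⁻¹) hmem
        convert this using 1
        rw [triBP, smul_eq_C_mul, ← hc1, ← hP, ← mul_assoc, ← mul_assoc, ← mul_assoc,
          ← C_mul, inv_mul_cancel₀ hc.ne', C_1, one_mul, mul_assoc]
      have htail : (X 0 ^ i * X 1 ^ j : MvPolynomial (Fin 2) ℝ) * (P - 1) ∈ M := by
        set h := P - 1 with hh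
        have hdeg : h.totalDegree ≤ k :=
          le_trans (totalDegree_sub _ _) (max_le (prod_deg q k) (by simp))
        have hcc : constantCoeff h = 0 := by
          rw [hh, map_sub, prod_constantCoeff, map_one, sub_self]
        rw [h.as_sum, Finset.mul_sum]
        apply Submodule.sum_mem
        intro μ hμ
        have hμ0 : μ 0 + μ 1 ≤ k := by
          rw [← fin2_sum]; exact le_trans (le_totalDegree hμ) hdeg
        have hμ1 : 1 ≤ μ 0 + μ 1 := by
          by_contra hcon
          have h0 : μ 0 = 0 ∧ μ 1 = 0 := by omega
          have : μ = 0 := by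
            ext a; fin_cases a
            · exact h0.1
            · exact h0.2
          rw [this] at hμ
          exact (MvPolynomial.mem_support_iff.mp hμ) hcc
        have : (X 0 ^ i * X 1 ^ j : MvPolynomial (Fin 2) ℝ) * monomial μ (coeff μ h)
            = (coeff μ h) • (X 0 ^ (i + μ 0) * X 1 ^ (j + μ 1)) := by
          rw [monomial_eq_fin2, smul_eq_C_mul]
          ring
        rw [this]
        exact Submodule.smul_mem _ _ (ih (i + μ 0) (j + μ 1) (by omega) (by omega))
      have : (X 0 ^ i * X 1 ^ j : MvPolynomial (Fin 2) ℝ)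
          = (X 0 ^ i * X 1 ^ j) * P - (X 0 ^ i * X 1 ^ j) * (P - 1) := by ring
      rw [this]
      exact Submodule.sub_mem _ hsm htail

noncomputable def simplexEquiv (n : ℕ) :
    {μ : Fin 2 →₀ ℕ | (μ.sum fun _ e => e) ≤ n} ≃ ↥(simplex n) where
  toFun μ := ⟨(μ.1 0, μ.1 1, n - (μ.1 0 + μ.1 1)), by
    have h := μ.2
    rw [Set.mem_setOf_eq, fin2_sum] at h
    exact mem_simplex (by omega)⟩
  invFun p := ⟨Finsupp.single 0 p.1.1 + Finsupp.single 1 p.1.2.1, by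
    have h := (Finset.mem_filter.mp p.2).2
    rw [Set.mem_setOf_eq, fin2_sum]
    simp only [Finsupp.add_apply, Finsupp.single_apply]
    norm_num
    omega⟩
  left_inv μ := by
    apply Subtype.ext
    ext a
    fin_cases a <;> simp [Finsupp.single_apply]
  right_inv p := by
    obtain ⟨⟨a, b, k⟩, hp⟩ := p
    have h : a + b + k = n := (Finset.mem_filter.mp hp).2
    apply Subtype.ext
    have e0 : ((Finsupp.single (0 : Fin 2) a + Finsupp.single 1 b : Fin 2 →₀ ℕ)) 0 = a := by
      simp [Finsupp.single_apply]
    have e1 : ((Finsupp.single (0 : Fin 2) a + Finsupp.single 1 b : Fin 2 →₀ ℕ)) 1 = b := by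
      simp [Finsupp.single_apply]
    simp only [e0, e1, Prod.mk.injEq]
    exact ⟨trivial, trivial, by omega⟩

noncomputable def simplexBasis (n : ℕ) :
    Module.Basis ↥(simplex n) ℝ ↥(MvPolynomial.restrictTotalDegree (Fin 2) ℝ n) :=
  (MvPolynomial.basisRestrictSupport ℝ {μ : Fin 2 →₀ ℕ | (μ.sum fun _ e => e) ≤ n}).reindex
    (simplexEquiv n)

end Aux

/-- the triangular q-Bernstein polynomials of degree n form a basis of the
    space of bivariate polynomials of total degree at most n: they are linearly
    independent and their span is that space. -/
theorem stmt7 (q : ℝ) (hq0 : 0 < q) (hq1 : q ≤ 1) (n : ℕ) :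
    LinearIndependent ℝ (fun p : simplex n => triBP q n p.1.1 p.1.2.1 p.1.2.2) ∧
    Submodule.span ℝ (Set.range (fun p : simplex n => triBP q n p.1.1 p.1.2.1 p.1.2.2)) =
      MvPolynomial.restrictTotalDegree (Fin 2) ℝ n := by
  have hspan : Submodule.span ℝ
      (Set.range (fun p : simplex n => triBP q n p.1.1 p.1.2.1 p.1.2.2)) =
      MvPolynomial.restrictTotalDegree (Fin 2) ℝ n := by
    apply le_antisymm
    · rw [Submodule.span_le]
      rintro _ ⟨p, rfl⟩
      have h : p.1.1 + p.1.2.1 + p.1.2.2 = n := (Finset.mem_filter.mp p.2).2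
      rw [SetLike.mem_coe, MvPolynomial.mem_restrictTotalDegree]
      calc (triBP q n p.1.1 p.1.2.1 p.1.2.2).totalDegree
          ≤ 0 + p.1.1 + p.1.2.1 + p.1.2.2 := triBP_deg q n _ _ _
        _ = n := by omega
    · intro p hp
      rw [MvPolynomial.mem_restrictTotalDegree] at hp
      rw [p.as_sum]
      apply Submodule.sum_mem
      intro μ hμ
      have hs : μ 0 + μ 1 ≤ n := by
        rw [← fin2_sum]
        exact le_trans (MvPolynomial.le_totalDegree hμ) hp
      rw [monomial_eq_fin2, mul_assoc, ← MvPolynomial.smul_eq_C_mul]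
      exact Submodule.smul_mem _ _ (key q hq0 n n (μ 0) (μ 1) (by omega) hs)
  refine ⟨?_, hspan⟩
  rw [linearIndependent_iff_card_eq_finrank_span]
  have : FiniteDimensional ℝ ↥(MvPolynomial.restrictTotalDegree (Fin 2) ℝ n) :=
    Module.Basis.finiteDimensional_of_finite (simplexBasis n)
  simp only [Set.finrank]
  rw [hspan]
  exact (Module.finrank_eq_card_basis (simplexBasis n)).symm
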